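/- Let {T_i}_{i∈I} be a finite collection of nonexpansive operators on a finite-dimensional Hilbert space X with a common fixed point. Let (λ_n) ⊆ (0,1] satisfy liminf λ_n(1−λ_n) > 0, and let (i_n) ⊆ I be admissible (each index appearing infinitely often). Then the sequence defined by x_{n+1} = (1−λ_n)x_n + λ_n T_{i_n}(x_n) converges to a point in ∩_{i∈I} Fix T_i. -/

import Mathlib

open Filter Topology

/-- `S : X → X` is nonexpansive. -/
def Nonexpansive {X : Type*} [NormedAddCommGroup X] (S : X → X) : Prop :=
  ∀ x y : X, ‖S x - S y‖ ≤ ‖x - y‖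

lemma norm_combo_sq {X : Type*} [NormedAddCommGroup X] [InnerProductSpace ℝ X]
    (u v : X) (l : ℝ) :
    ‖(1-l)•u + l•v‖^2 = (1-l)*‖u‖^2 + l*‖v‖^2 - l*(1-l)*‖u-v‖^2 := by
  have h1 : ‖(1-l)•u + l•v‖^2 = ‖(1-l)•u‖^2 + 2*inner ℝ ((1-l)•u) (l•v) + ‖l•v‖^2 :=
    norm_add_sq_real _ _
  have h2 : ‖u - v‖^2 = ‖u‖^2 - 2*inner ℝ u v + ‖v‖^2 := norm_sub_sq_real u v
  rw [real_inner_smul_left, real_inner_smul_right, norm_smul, norm_smul] at h1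
  rw [h1, h2, Real.norm_eq_abs, Real.norm_eq_abs, mul_pow, mul_pow, sq_abs, sq_abs]
  ring

/-- Krasnosel'skiĭ–Mann iterations with admissible control: if `{T_i}_{i∈I}` is
a finite family of nonexpansive operators with a common fixed point,
`(λ_n) ⊆ (0,1]` with `liminf λ_n(1−λ_n) > 0` and every index appears infinitely
often in `(i_n)`, then `x_{n+1} = (1−λ_n)x_n + λ_n T_{i_n}(x_n)` converges to a
common fixed point of the `T_i`. -/
theorem stmt_9 {X I : Type*}
    [NormedAddCommGroup X] [InnerProductSpace ℝ X] [FiniteDimensional ℝ X]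
    [Fintype I] [Nonempty I]
    (T : I → X → X) (hT : ∀ i, Nonexpansive (T i))
    (hcommon : ∃ p : X, ∀ i, T i p = p)
    (lam : ℕ → ℝ) (hlam : ∀ n, lam n ∈ Set.Ioc (0 : ℝ) 1)
    (hliminf : 0 < Filter.atTop.liminf fun n => lam n * (1 - lam n))
    (iseq : ℕ → I) (hadm : ∀ i, ∃ᶠ n in atTop, iseq n = i)
    (x : ℕ → X)
    (hrec : ∀ n, x (n + 1) = (1 - lam n) • x n + lam n • T (iseq n) (x n)) :
    ∃ xb : X, (∀ i, T i xb = xb) ∧ Tendsto x atTop (nhds xb) := by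
  classical
  obtain ⟨p, hp⟩ := hcommon
  set r : ℕ → ℝ := fun n => ‖T (iseq n) (x n) - x n‖ with hrdef
  have hdecomp : ∀ (q : X) (n : ℕ),
      x (n+1) - q = (1 - lam n) • (x n - q) + lam n • (T (iseq n) (x n) - q) := by
    intro q n; rw [hrec n]; module
  -- one-step Fejér monotonicity w.r.t. any point fixed by the operator used at step n
  have stepA : ∀ (n : ℕ) (q : X), T (iseq n) q = q → ‖x (n+1) - q‖ ≤ ‖x n - q‖ := by
    intro n q hq
    obtain ⟨hl0, hl1⟩ := hlam n
    have hne : ‖T (iseq n) (x n) - q‖ ≤ ‖x n - q‖ := by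
      have := hT (iseq n) (x n) q; rwa [hq] at this
    calc ‖x (n+1) - q‖ = ‖(1 - lam n) • (x n - q) + lam n • (T (iseq n) (x n) - q)‖ := by
          rw [hdecomp q n]
      _ ≤ ‖(1 - lam n) • (x n - q)‖ + ‖lam n • (T (iseq n) (x n) - q)‖ := norm_add_le _ _
      _ = (1 - lam n) * ‖x n - q‖ + lam n * ‖T (iseq n) (x n) - q‖ := by
          rw [norm_smul, norm_smul, Real.norm_eq_abs, Real.norm_eq_abs,
            abs_of_nonneg (by linarith), abs_of_nonneg (le_of_lt hl0)]
      _ ≤ ‖x n - q‖ := by nlinarith [norm_nonneg (x n - q)]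
  -- quadratic estimate
  have stepB : ∀ n, ‖x (n+1) - p‖^2 ≤ ‖x n - p‖^2 - lam n * (1 - lam n) * r n ^ 2 := by
    intro n
    obtain ⟨hl0, hl1⟩ := hlam n
    have hne : ‖T (iseq n) (x n) - p‖ ≤ ‖x n - p‖ := by
      have := hT (iseq n) (x n) p; rwa [hp (iseq n)] at this
    have hid : ‖x (n+1) - p‖^2 = (1 - lam n)*‖x n - p‖^2 + lam n*‖T (iseq n) (x n) - p‖^2
        - lam n*(1 - lam n)*‖(x n - p) - (T (iseq n) (x n) - p)‖^2 := by
      rw [hdecomp p n]; exact norm_combo_sq _ _ _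
    have hrw : ‖(x n - p) - (T (iseq n) (x n) - p)‖ = r n := by
      rw [hrdef]
      have : (x n - p) - (T (iseq n) (x n) - p) = -(T (iseq n) (x n) - x n) := by abel
      rw [this, norm_neg]
    rw [hrw] at hid
    have hb2 : ‖T (iseq n) (x n) - p‖^2 ≤ ‖x n - p‖^2 :=
      pow_le_pow_left₀ (norm_nonneg _) hne 2
    nlinarith [mul_le_mul_of_nonneg_left hb2 (le_of_lt hl0)]
  have hA_anti : Antitone fun n => ‖x n - p‖ :=
    antitone_nat_of_succ_le fun n => stepA n p (hp _)
  have hbddb : BddBelow (Set.range fun n => ‖x n - p‖) :=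
    ⟨0, by rintro a ⟨n, rfl⟩; exact norm_nonneg _⟩
  have hL : Tendsto (fun n => ‖x n - p‖) atTop (𝓝 (⨅ n, ‖x n - p‖)) :=
    tendsto_atTop_ciInf hA_anti hbddb
  have hL2 : Tendsto (fun n => ‖x n - p‖^2) atTop (𝓝 ((⨅ n, ‖x n - p‖)^2)) := hL.pow 2
  have hdiff : Tendsto (fun n => ‖x n - p‖^2 - ‖x (n+1) - p‖^2) atTop (𝓝 0) := by
    have h2 : Tendsto (fun n => ‖x (n+1) - p‖^2) atTop (𝓝 ((⨅ n, ‖x n - p‖)^2)) :=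
      hL2.comp (tendsto_add_atTop_nat 1)
    simpa using hL2.sub h2
  -- lower bound on lam n * (1 - lam n)
  set c := Filter.atTop.liminf fun n => lam n * (1 - lam n) with hc
  have hbdd' : IsBoundedUnder (· ≥ ·) atTop fun n => lam n * (1 - lam n) := by
    refine isBoundedUnder_of ⟨0, fun n => ?_⟩
    obtain ⟨hl0, hl1⟩ := hlam n; nlinarith
  have hδev : ∀ᶠ n in atTop, c/2 < lam n * (1 - lam n) :=
    eventually_lt_of_lt_liminf (by linarith) hbdd'
  -- residuals tend to zero
  have hres : Tendsto r atTop (𝓝 0) := by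
    have hsq' : Tendsto (fun n => (c/2) * r n ^ 2) atTop (𝓝 0) := by
      apply squeeze_zero' (g := fun n => ‖x n - p‖^2 - ‖x (n+1) - p‖^2)
      · exact Eventually.of_forall fun n => by positivity
      · filter_upwards [hδev] with n hn
        have hB := stepB n
        nlinarith [sq_nonneg (r n)]
      · exact hdiff
    have hsq : Tendsto (fun n => r n ^ 2) atTop (𝓝 0) := by
      have hc0 : c ≠ 0 := ne_of_gt hliminf
      have h2 := hsq'.const_mul (2/c)
      have heq : ∀ n, (2/c) * ((c/2) * r n ^ 2) = r n ^ 2 := fun n => by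
        field_simp
      rw [mul_zero] at h2
      simpa only [heq] using h2
    have h3 : Tendsto (fun n => Real.sqrt (r n ^ 2)) atTop (𝓝 (Real.sqrt 0)) :=
      (Real.continuous_sqrt.tendsto 0).comp hsq
    rw [Real.sqrt_zero] at h3
    exact h3.congr fun n => Real.sqrt_sq (norm_nonneg _)
  -- cluster point
  have hball : ∀ n, x n ∈ Metric.closedBall p ‖x 0 - p‖ := fun n => by
    simpa [Metric.mem_closedBall, dist_eq_norm] using hA_anti (Nat.zero_le n)
  obtain ⟨y, _, φ, hφ, hxy⟩ := (isCompact_closedBall p ‖x 0 - p‖).tendsto_subseq hball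
  have hxyn : Tendsto (fun k => ‖x (φ k) - y‖) atTop (𝓝 0) := by
    have := tendsto_iff_norm_sub_tendsto_zero.mp hxy
    simpa [Function.comp] using this
  -- every cluster point is a common fixed point
  have hfix : ∀ i, T i y = y := by
    by_contra hcon
    push_neg at hcon
    obtain ⟨j, hj⟩ := hcon
    have hex : ∀ k : ℕ, ∃ m, φ k ≤ m ∧ T (iseq m) y ≠ y := by
      intro k
      obtain ⟨m, hm1, hm2⟩ := ((hadm j).and_eventually (eventually_ge_atTop (φ k))).exists
      exact ⟨m, hm2, by rw [hm1]; exact hj⟩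
    set m : ℕ → ℕ := fun k => Nat.find (hex k) with hmdef
    have hm1 : ∀ k, φ k ≤ m k ∧ T (iseq (m k)) y ≠ y := fun k => Nat.find_spec (hex k)
    have hbound : ∀ k l, φ k ≤ l → l ≤ m k → ‖x l - y‖ ≤ ‖x (φ k) - y‖ := by
      intro k l hl1 hl2
      induction l with
      | zero =>
        have : φ k = 0 := Nat.le_zero.mp hl1
        rw [this]
      | succ l ih =>
        by_cases h : φ k ≤ l
        · have hlt : l < m k := by omega
          have hmin := Nat.find_min (hex k) hlt
          rw [hmdef] at hlt
          push_neg at hmin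
          have hfixl : T (iseq l) y = y := hmin h
          exact le_trans (stepA l y hfixl) (ih h (by omega))
        · have : φ k = l + 1 := by omega
          rw [this]
    have hmy : Tendsto (fun k => ‖x (m k) - y‖) atTop (𝓝 0) :=
      squeeze_zero (fun k => norm_nonneg _)
        (fun k => hbound k (m k) (hm1 k).1 le_rfl) hxyn
    have hm_top : Tendsto m atTop atTop :=
      tendsto_atTop_mono (fun k => le_trans hφ.le_apply (hm1 k).1) tendsto_id
    obtain ⟨j', hj'⟩ := Finite.exists_infinite_fiber (fun k => iseq (m k))
    have hfreq : ∃ᶠ k in atTop, iseq (m k) = j' := by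
      rw [Nat.frequently_atTop_iff_infinite]
      have h4 := Set.infinite_coe_iff.mp hj'
      exact h4
    have hj'ne : T j' y ≠ y := by
      obtain ⟨k₀, hk₀⟩ := hfreq.exists
      have := (hm1 k₀).2
      rwa [hk₀] at this
    have hkey : ∀ ε > (0:ℝ), ‖T j' y - y‖ < ε := by
      intro ε hε
      have htend : Tendsto (fun k => 2*‖x (m k) - y‖ + r (m k)) atTop (𝓝 0) := by
        have := (hmy.const_mul 2).add (hres.comp hm_top)
        simpa [Function.comp] using this
      have h1 : ∀ᶠ k in atTop, 2*‖x (m k) - y‖ + r (m k) < ε :=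
        htend.eventually_lt_const hε
      obtain ⟨k, hk1, hk2⟩ := (hfreq.and_eventually h1).exists
      have hrk : ‖T j' (x (m k)) - x (m k)‖ = r (m k) := by
        simp only [hrdef]; rw [hk1]
      calc ‖T j' y - y‖
          = ‖(T j' y - T j' (x (m k))) + (T j' (x (m k)) - x (m k)) + (x (m k) - y)‖ := by
            congr 1; abel
        _ ≤ ‖T j' y - T j' (x (m k))‖ + ‖T j' (x (m k)) - x (m k)‖ + ‖x (m k) - y‖ :=
            norm_add₃_le
        _ ≤ ‖y - x (m k)‖ + r (m k) + ‖x (m k) - y‖ := by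
            have h3 := hT j' y (x (m k))
            rw [hrk]
            linarith
        _ = 2*‖x (m k) - y‖ + r (m k) := by rw [norm_sub_rev]; ring
        _ < ε := hk2
    have h0 : ‖T j' y - y‖ ≤ 0 := by
      by_contra h
      push_neg at h
      exact absurd (hkey _ h) (lt_irrefl _)
    have : T j' y = y := by
      have := le_antisymm h0 (norm_nonneg _)
      rwa [norm_eq_zero, sub_eq_zero] at this
    exact hj'ne this
  -- convergence of the whole sequence to y
  refine ⟨y, hfix, ?_⟩
  have hanti : Antitone fun n => ‖x n - y‖ :=
    antitone_nat_of_succ_le fun n => stepA n y (hfix _)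
  have hbddy : BddBelow (Set.range fun n => ‖x n - y‖) :=
    ⟨0, by rintro a ⟨n, rfl⟩; exact norm_nonneg _⟩
  have hlim : Tendsto (fun n => ‖x n - y‖) atTop (𝓝 (⨅ n, ‖x n - y‖)) :=
    tendsto_atTop_ciInf hanti hbddy
  have hsub : Tendsto (fun k => ‖x (φ k) - y‖) atTop (𝓝 (⨅ n, ‖x n - y‖)) := by
    have := hlim.comp hφ.tendsto_atTop
    exact this
  have hzero : (⨅ n, ‖x n - y‖) = 0 := tendsto_nhds_unique hsub hxyn
  rw [hzero] at hlim
  exact tendsto_iff_norm_sub_tendsto_zero.mpr hlim
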